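/- For every (Π,ℛ)-automaton A, the class of pointed models accepted by A is definable by a (possibly infinite) disjunction of modal formulae, and the class of pointed models rejected by A is definable by a (possibly infinite) disjunction of modal formulae. -/

import Mathlib

/-- Formulae of modal logic ML(Π,ℛ): `P` indexes unary predicate symbols,
`R` indexes binary relation symbols (modalities). -/
inductive MF (P R : Type) : Type
  | top : MF P R
  | atom : P → MF P R
  | neg : MF P R → MF P R
  | and : MF P R → MF P R → MF P R
  | dia : R → MF P R → MF P R

/-- A (Π,ℛ)-Kripke model with domain `W`. -/
structure KModel (P R W : Type) where
  val : P → W → Prop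
  rel : R → W → W → Prop

/-- Satisfaction for modal logic. -/
def msat {P R W : Type} (M : KModel P R W) : W → MF P R → Prop
  | _, .top => True
  | w, .atom p => M.val p w
  | w, .neg φ => ¬ msat M w φ
  | w, .and φ ψ => msat M w φ ∧ msat M w ψ
  | w, .dia r φ => ∃ v, M.rel r w v ∧ msat M v φ

/-- Abstract representation of (Π,ℛ,n)-types: a depth-0 type records the set of
unary predicates holding at a point; a depth-(n+1) type records a depth-n type
together with, for each modality, the set of depth-n types realized at successors. -/
def TypeN (P R : Type) : ℕ → Type
  | 0 => Set P
  | n+1 => TypeN P R n × (R → Set (TypeN P R n))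

/-- A pointed model `(M,w)` satisfies the (Π,ℛ,n)-type `τ`. -/
def satT {P R W : Type} (M : KModel P R W) : (n : ℕ) → W → TypeN P R n → Prop
  | 0, w, τ => ∀ p, M.val p w ↔ τ p
  | n+1, w, τ => satT M n w τ.1 ∧
      ∀ r σ, ((∃ v, M.rel r w v ∧ satT M n v σ) ↔ τ.2 r σ)

/-- The (Π,ℛ,n)-type of a pointed model `(M,w)`. -/
def typeOf {P R W : Type} (M : KModel P R W) : (n : ℕ) → W → TypeN P R n
  | 0, w => fun p => M.val p w
  | n+1, w => ⟨typeOf M n w, fun r σ => ∃ v, M.rel r w v ∧ typeOf M n v = σ⟩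

/-- A synchronized message passing (Π,ℛ)-automaton with states `Q` and messages `Msg`. -/
structure MPA (P R Q Msg : Type) where
  init : Set P → Q
  trans : (R → Set Msg) → Q → Q
  msgf : Q → R → Msg
  accept : Set Q
  reject : Set Q

/-- The state of automaton `A` at node `w` of model `M` in round `n`. -/
def MPA.run {P R W Q Msg : Type} (A : MPA P R Q Msg) (M : KModel P R W) : ℕ → W → Q
  | 0, w => A.init {p | M.val p w}
  | n+1, w =>
      A.trans (fun r => {m | ∃ v, M.rel r w v ∧ m = A.msgf (A.run M n v) r}) (A.run M n w)

/-- `A` accepts `(M,w)` in round `n`. -/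
def MPA.acceptsAt {P R W Q Msg : Type} (A : MPA P R Q Msg) (M : KModel P R W)
    (w : W) (n : ℕ) : Prop :=
  A.run M n w ∈ A.accept ∧ ∀ m < n, A.run M m w ∉ A.reject

/-- `A` rejects `(M,w)` in round `n`. -/
def MPA.rejectsAt {P R W Q Msg : Type} (A : MPA P R Q Msg) (M : KModel P R W)
    (w : W) (n : ℕ) : Prop :=
  A.run M n w ∈ A.reject ∧ ∀ m < n, A.run M m w ∉ A.accept

/-- `A` accepts the pointed model `(M,w)`. -/
def MPA.accepts {P R W Q Msg : Type} (A : MPA P R Q Msg) (M : KModel P R W) (w : W) : Prop :=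
  ∃ n, A.acceptsAt M w n

/-- `A` rejects the pointed model `(M,w)`. -/
def MPA.rejects {P R W Q Msg : Type} (A : MPA P R Q Msg) (M : KModel P R W) (w : W) : Prop :=
  ∃ n, A.rejectsAt M w n

/-- Formulae of first-order logic FO(Π,ℛ) with variables indexed by ℕ. -/
inductive FO (P R : Type) : Type
  | top : FO P R
  | eq : ℕ → ℕ → FO P R
  | atom : P → ℕ → FO P R
  | rel : R → ℕ → ℕ → FO P R
  | neg : FO P R → FO P R
  | and : FO P R → FO P R → FO P R
  | ex : ℕ → FO P R → FO P R

/-- First-order satisfaction under an assignment `f`. -/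
def fsat {P R W : Type} (M : KModel P R W) : (ℕ → W) → FO P R → Prop
  | _, .top => True
  | f, .eq x y => f x = f y
  | f, .atom p x => M.val p (f x)
  | f, .rel r x y => M.rel r (f x) (f y)
  | f, .neg φ => ¬ fsat M f φ
  | f, .and φ ψ => fsat M f φ ∧ fsat M f ψ
  | f, .ex x φ => ∃ v, fsat M (Function.update f x v) φ

section Aux

open Classical

/-- Finite conjunction of modal formulae. -/
def conjL {P R : Type} : List (MF P R) → MF P R
  | [] => .top
  | φ :: l => .and φ (conjL l)

lemma msat_conjL {P R W : Type} (M : KModel P R W) (w : W) :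
    ∀ l : List (MF P R), msat M w (conjL l) ↔ ∀ φ ∈ l, msat M w φ
  | [] => by simp [conjL, msat]
  | φ :: l => by simp [conjL, msat, msat_conjL M w l]

instance finTypeN (P R : Type) [Finite P] [Finite R] : ∀ n, Finite (TypeN P R n)
  | 0 => inferInstanceAs (Finite (Set P))
  | n+1 =>
      haveI := finTypeN P R n
      inferInstanceAs (Finite (TypeN P R n × (R → Set (TypeN P R n))))

noncomputable def enumL (α : Type) [Finite α] : List α :=
  haveI := Fintype.ofFinite α
  Finset.univ.toList

lemma mem_enumL {α : Type} [Finite α] (a : α) : a ∈ enumL α := by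
  simp [enumL]

lemma forall_map_enum {P R W α : Type} [Finite α] (M : KModel P R W) (w : W)
    (f : α → MF P R) :
    (∀ φ ∈ (enumL α).map f, msat M w φ) ↔ ∀ a, msat M w (f a) := by
  simp only [List.mem_map, forall_exists_index, and_imp]
  exact ⟨fun h a => h _ a (mem_enumL a) rfl, fun h φ a _ hφ => hφ ▸ h a⟩

variable {P R : Type} [Finite P] [Finite R]

/-- Characteristic modal formula of a depth-n type. -/
noncomputable def charF : (n : ℕ) → TypeN P R n → MF P R
  | 0, τ => conjL ((enumL P).map fun p => if τ p then .atom p else .neg (.atom p))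
  | n+1, τ => .and (charF n τ.1)
      (conjL ((enumL (R × TypeN P R n)).map fun x =>
        if τ.2 x.1 x.2 then .dia x.1 (charF n x.2)
        else .neg (.dia x.1 (charF n x.2))))

lemma typeOf_succ_eq {W : Type} (M : KModel P R W) (n : ℕ) (w : W) (τ : TypeN P R (n+1)) :
    typeOf M (n+1) w = τ ↔ typeOf M n w = τ.1 ∧
      ∀ r σ, ((∃ v, M.rel r w v ∧ typeOf M n v = σ) ↔ τ.2 r σ) := by
  constructor
  · rintro rfl
    exact ⟨rfl, fun r σ => Iff.rfl⟩
  · rintro ⟨h1, h2⟩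
    show (⟨typeOf M n w, fun r σ => ∃ v, M.rel r w v ∧ typeOf M n v = σ⟩ :
      TypeN P R n × (R → Set (TypeN P R n))) = τ
    refine Prod.ext h1 ?_
    funext r σ
    exact propext (h2 r σ)

lemma charF_iff {W : Type} (M : KModel P R W) :
    ∀ (n : ℕ) (τ : TypeN P R n) (w : W), msat M w (charF n τ) ↔ typeOf M n w = τ
  | 0, τ, w => by
      rw [charF, msat_conjL, forall_map_enum]
      have h0 : (typeOf M 0 w = τ) ↔ ∀ p, M.val p w ↔ τ p := by
        exact ⟨fun h p => by subst h; exact Iff.rfl,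
          fun h => (funext fun p => propext (h p) : (fun p => M.val p w : P → Prop) = τ)⟩
      rw [h0]
      refine forall_congr' fun p => ?_
      by_cases hp : τ p <;> simp [hp, msat]
  | n+1, τ, w => by
      rw [charF, typeOf_succ_eq]
      simp only [msat, msat_conjL, forall_map_enum]
      rw [charF_iff M n τ.1 w]
      refine and_congr Iff.rfl ?_
      rw [Prod.forall]
      refine forall_congr' fun r => forall_congr' fun σ => ?_
      have hc : ∀ v, msat M v (charF n σ) ↔ typeOf M n v = σ := fun v => charF_iff M n σ v
      by_cases hs : τ.2 r σ <;> simp [hs, msat, hc]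

variable {Q Msg : Type} (A : MPA P R Q Msg)

/-- The state of the automaton determined by a depth-n type. -/
def stateOf : (n : ℕ) → TypeN P R n → Q
  | 0, τ => A.init {p | τ p}
  | n+1, τ => A.trans (fun r => {m | ∃ σ, τ.2 r σ ∧ m = A.msgf (stateOf n σ) r})
      (stateOf n τ.1)

lemma stateOf_typeOf {W : Type} (M : KModel P R W) :
    ∀ (n : ℕ) (w : W), stateOf A n (typeOf M n w) = A.run M n w
  | 0, w => rfl
  | n+1, w => by
      show A.trans _ _ = A.trans _ _
      congr 1
      · funext r
        ext m
        constructor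
        · rintro ⟨σ, ⟨v, hv, rfl⟩, rfl⟩
          exact ⟨v, hv, by rw [stateOf_typeOf M n v]⟩
        · rintro ⟨v, hv, rfl⟩
          exact ⟨typeOf M n v, ⟨v, hv, rfl⟩, by rw [stateOf_typeOf M n v]⟩
      · exact stateOf_typeOf M n w

/-- Agreement of types at depth n implies agreement at all lower depths. -/
lemma typeOf_mono {W W' : Type} (M : KModel P R W) (M' : KModel P R W') :
    ∀ (n : ℕ) (w : W) (w' : W'), typeOf M n w = typeOf M' n w' →
      ∀ m ≤ n, typeOf M m w = typeOf M' m w'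
  | 0, w, w', h, m, hm => by
      interval_cases m
      exact h
  | n+1, w, w', h, m, hm => by
      rcases Nat.lt_or_ge m (n+1) with h' | h'
      · have h1 : typeOf M n w = typeOf M' n w' := congrArg Prod.fst h
        exact typeOf_mono M M' n w w' h1 m (by omega)
      · have : m = n+1 := by omega
        subst this
        exact h

lemma run_eq_of_typeOf {W W' : Type} (M : KModel P R W) (M' : KModel P R W')
    (n : ℕ) (w : W) (w' : W') (h : typeOf M n w = typeOf M' n w') :
    ∀ m ≤ n, A.run M m w = A.run M' m w' := by
  intro m hm
  rw [← stateOf_typeOf A M m w, ← stateOf_typeOf A M' m w',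
    typeOf_mono M M' n w w' h m hm]

/-- Main lemma, for an arbitrary pair of accepting/blocking state sets. -/
lemma key (Acc Rej : Set Q) :
    ∃ Φ : Set (MF P R), ∀ (W : Type) (M : KModel P R W) (w : W),
      (∃ n, A.run M n w ∈ Acc ∧ ∀ m < n, A.run M m w ∉ Rej) ↔ ∃ φ ∈ Φ, msat M w φ := by
  refine ⟨{φ | ∃ n, ∃ τ : TypeN P R n,
      (∃ (W : Type) (M : KModel P R W) (w : W), typeOf M n w = τ ∧
        A.run M n w ∈ Acc ∧ ∀ m < n, A.run M m w ∉ Rej) ∧ φ = charF n τ}, ?_⟩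
  intro W M w
  constructor
  · rintro ⟨n, h1, h2⟩
    exact ⟨charF n (typeOf M n w),
      ⟨n, typeOf M n w, ⟨W, M, w, rfl, h1, h2⟩, rfl⟩,
      (charF_iff M n (typeOf M n w) w).mpr rfl⟩
  · rintro ⟨φ, ⟨n, τ, ⟨W', M', w', hty, h1, h2⟩, rfl⟩, hsat⟩
    have hts : typeOf M n w = typeOf M' n w' := by
      rw [(charF_iff M n τ w).mp hsat, hty]
    refine ⟨n, ?_, ?_⟩
    · rw [run_eq_of_typeOf A M M' n w w' hts n le_rfl]; exact h1
    · intro m hm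
      rw [run_eq_of_typeOf A M M' n w w' hts m (le_of_lt hm)]
      exact h2 m hm

end Aux

/-- the class of pointed models accepted by an automaton A is definable
by a (possibly infinite) disjunction of modal formulae, and likewise for the class
of pointed models rejected by A. -/
theorem stmt_6 (P R : Type) [Finite P] [Finite R] (Q Msg : Type) (A : MPA P R Q Msg) :
    (∃ Φ : Set (MF P R), ∀ (W : Type) (M : KModel P R W) (w : W),
        A.accepts M w ↔ ∃ φ ∈ Φ, msat M w φ) ∧
    (∃ Ψ : Set (MF P R), ∀ (W : Type) (M : KModel P R W) (w : W),
        A.rejects M w ↔ ∃ ψ ∈ Ψ, msat M w ψ) := by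
  constructor
  · obtain ⟨Φ, hΦ⟩ := key A A.accept A.reject
    exact ⟨Φ, fun W M w => hΦ W M w⟩
  · obtain ⟨Ψ, hΨ⟩ := key A A.reject A.accept
    exact ⟨Ψ, fun W M w => hΨ W M w⟩
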